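/- For every natural number k ≥ 2, the maximum number of coins n for which a balanced weighing scheme using k weighings identifies the counterfeit is exactly (3 ^ k - 3) / 2: that is, (3 ^ k - 3) / 2 is the greatest element of the set of n admitting such a scheme. -/

import Mathlib

/-- A weighing scheme: every entry lies in {-1, 0, 1}. -/
def IsScheme {k n : ℕ} (M : Fin k → Fin n → ℤ) : Prop :=
  ∀ j i, M j i ∈ ({-1, 0, 1} : Set ℤ)

/-- A scheme is balanced: each weighing puts equally many coins on each pan. -/
def IsBalanced {k n : ℕ} (M : Fin k → Fin n → ℤ) : Prop :=
  ∀ j, (Finset.univ.filter (fun i => M j i = 1)).card =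
       (Finset.univ.filter (fun i => M j i = -1)).card

/-- A counterfeit scenario: genuine weight `g`, counterfeit coin `c`, weights `w`. -/
def IsScenario {n : ℕ} (g : ℝ) (c : Fin n) (w : Fin n → ℝ) : Prop :=
  (∀ i, i ≠ c → w i = g) ∧ w c ≠ g

/-- The scheme identifies the counterfeit coin and its weight deviation. -/
def Identifies {k n : ℕ} (M : Fin k → Fin n → ℤ) : Prop :=
  ∀ (g : ℝ) (c : Fin n) (w : Fin n → ℝ) (g' : ℝ) (c' : Fin n) (w' : Fin n → ℝ),
    IsScenario g c w → IsScenario g' c' w' →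
    (∀ j, Real.sign (∑ i, (M j i : ℝ) * w i) = Real.sign (∑ i, (M j i : ℝ) * w' i)) →
    c = c' ∧ Real.sign (w c - g) = Real.sign (w' c' - g')


namespace CoinsAux

def Vset (k : ℕ) : Finset (Fin k → ℤ) := Fintype.piFinset (fun _ => ({-1,0,1} : Finset ℤ))

lemma mem_Vset {k : ℕ} {v : Fin k → ℤ} : v ∈ Vset k ↔ ∀ j, v j = -1 ∨ v j = 0 ∨ v j = 1 := by
  simp [Vset, Fintype.mem_piFinset]

lemma card_Vset (k : ℕ) : (Vset k).card = 3 ^ k := by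
  simp [Vset, Fintype.card_piFinset]

lemma neg_mem_Vset {k : ℕ} {v : Fin k → ℤ} (h : v ∈ Vset k) : -v ∈ Vset k := by
  rw [mem_Vset] at h ⊢
  intro j
  have := h j
  simp only [Pi.neg_apply]
  omega

def enc {k : ℕ} (v : Fin k → ℤ) : ℤ := ∑ j, v j * 3 ^ (j : ℕ)

lemma enc_neg {k : ℕ} (v : Fin k → ℤ) : enc (-v) = -enc v := by
  simp [enc, Finset.sum_neg_distrib]

lemma enc_zero {k : ℕ} : enc (0 : Fin k → ℤ) = 0 := by simp [enc]

lemma enc_succ {k : ℕ} (v : Fin (k+1) → ℤ) :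
    enc v = v 0 + 3 * enc (Fin.tail v) := by
  rw [enc, Fin.sum_univ_succ]
  simp [enc, Fin.tail, Finset.mul_sum]
  congr 1
  funext j
  ring

lemma enc_bound {k : ℕ} {v : Fin k → ℤ} (h : v ∈ Vset k) : 2 * |enc v| + 1 ≤ 3 ^ k := by
  induction k with
  | zero => simp [enc]
  | succ n ih =>
    have ht : Fin.tail v ∈ Vset n := by
      rw [mem_Vset] at h ⊢; intro j; exact h j.succ
    have h0 := (mem_Vset.1 h) 0
    have hb := ih ht
    rw [enc_succ]
    have : |v 0 + 3 * enc (Fin.tail v)| ≤ |v 0| + 3 * |enc (Fin.tail v)| := by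
      calc |v 0 + 3 * enc (Fin.tail v)| ≤ |v 0| + |3 * enc (Fin.tail v)| := abs_add_le _ _
        _ = |v 0| + 3 * |enc (Fin.tail v)| := by rw [abs_mul]; norm_num
    have hv0 : |v 0| ≤ 1 := by rcases h0 with h|h|h <;> simp [h]
    have : (3:ℤ)^(n+1) = 3 * 3^n := by ring
    omega

lemma enc_inj {k : ℕ} {v w : Fin k → ℤ} (hv : v ∈ Vset k) (hw : w ∈ Vset k)
    (h : enc v = enc w) : v = w := by
  induction k with
  | zero => funext j; exact j.elim0
  | succ n ih =>
    have htv : Fin.tail v ∈ Vset n := by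
      rw [mem_Vset] at hv ⊢; intro j; exact hv j.succ
    have htw : Fin.tail w ∈ Vset n := by
      rw [mem_Vset] at hw ⊢; intro j; exact hw j.succ
    rw [enc_succ, enc_succ] at h
    have h0v := (mem_Vset.1 hv) 0
    have h0w := (mem_Vset.1 hw) 0
    have h0 : v 0 = w 0 := by omega
    have htail : Fin.tail v = Fin.tail w := by
      apply ih htv htw
      omega
    funext j
    rcases Fin.eq_zero_or_eq_succ j with rfl | ⟨i, rfl⟩
    · exact h0
    · exact congrFun htail i

def Pset (k : ℕ) : Finset (Fin k → ℤ) := (Vset k).filter (fun v => 0 < enc v)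

lemma enc_ne_zero {k : ℕ} {v : Fin k → ℤ} (hv : v ∈ Vset k) (h : v ≠ 0) : enc v ≠ 0 := by
  intro he
  exact h (enc_inj hv (by rw [mem_Vset]; intro j; simp) (by rw [he, enc_zero]))

/-- halving lemma -/
lemma card_eq_two_mul {k : ℕ} {s : Finset (Fin k → ℤ)} (hsub : s ⊆ Vset k)
    (h0 : (0 : Fin k → ℤ) ∉ s) (hneg : ∀ v ∈ s, -v ∈ s) :
    s.card = 2 * (s ∩ Pset k).card := by
  classical
  have key : s = (s ∩ Pset k) ∪ (s ∩ Pset k).image Neg.neg := by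
    ext v
    simp only [Finset.mem_union, Finset.mem_inter, Finset.mem_image, Pset, Finset.mem_filter]
    constructor
    · intro hv
      have hvV := hsub hv
      have hne : v ≠ 0 := fun h => h0 (h ▸ hv)
      have := enc_ne_zero hvV hne
      rcases lt_or_gt_of_ne this with hlt | hgt
      · right
        refine ⟨-v, ⟨⟨hneg v hv, neg_mem_Vset hvV, ?_⟩, by simp⟩⟩
        rw [enc_neg]; omega
      · left; exact ⟨hv, hvV, hgt⟩
    · rintro (⟨hv, _⟩ | ⟨u, ⟨hu, _⟩, rfl⟩)
      · exact hv
      · exact hneg u hu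
  have hdisj : Disjoint (s ∩ Pset k) ((s ∩ Pset k).image Neg.neg) := by
    rw [Finset.disjoint_left]
    intro v hv h
    have hvP := (Finset.mem_inter.1 hv).2
    simp only [Finset.mem_image, Finset.mem_inter, Pset, Finset.mem_filter] at h hvP
    obtain ⟨u, ⟨_, _, hu⟩, rfl⟩ := h
    rw [enc_neg] at hvP
    omega
  conv_lhs => rw [key]
  rw [Finset.card_union_of_disjoint hdisj, Finset.card_image_of_injective _ neg_injective]
  ring

lemma card_Pset (k : ℕ) : 2 * (Pset k).card + 1 = 3 ^ k := by
  have h1 : ((Vset k).erase 0).card = 2 * (((Vset k).erase 0) ∩ Pset k).card := by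
    apply card_eq_two_mul (Finset.erase_subset _ _) (Finset.notMem_erase _ _)
    intro v hv
    rw [Finset.mem_erase] at hv ⊢
    exact ⟨fun h => hv.1 (by simpa using congrArg Neg.neg h), neg_mem_Vset hv.2⟩
  have h2 : ((Vset k).erase 0) ∩ Pset k = Pset k := by
    apply Finset.inter_eq_right.2
    intro v hv
    rw [Pset, Finset.mem_filter] at hv
    rw [Finset.mem_erase]
    refine ⟨fun h => ?_, hv.1⟩
    rw [h, enc_zero] at hv; exact lt_irrefl 0 hv.2
  have h3 : (0 : Fin k → ℤ) ∈ Vset k := by rw [mem_Vset]; intro j; simp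
  have h4 := Finset.card_erase_of_mem h3
  rw [card_Vset] at h4
  have h5 : 1 ≤ 3 ^ k := Nat.one_le_pow _ _ (by norm_num)
  rw [h2] at h1
  omega

lemma sum_Vset_zero (k : ℕ) : ∑ v ∈ Vset k, v = 0 := by
  have himg : (Vset k).image Neg.neg = Vset k := by
    ext v
    simp only [Finset.mem_image]
    constructor
    · rintro ⟨u, hu, rfl⟩; exact neg_mem_Vset hu
    · intro hv; exact ⟨-v, neg_mem_Vset hv, by simp⟩
  have : ∑ v ∈ Vset k, v = ∑ v ∈ (Vset k).image Neg.neg, v := by rw [himg]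
  rw [Finset.sum_image (fun a _ b _ h => neg_injective h)] at this
  rw [Finset.sum_neg_distrib] at this
  have h2 := congrArg (· + ∑ v ∈ Vset k, v) this
  simp only [neg_add_cancel] at h2
  funext j
  have h3 := congrFun h2 j
  simp only [Pi.add_apply] at h3
  have h4 : (0 : Fin k → ℤ) j = 0 := rfl
  rw [h4] at h3
  show _ = (0 : Fin k → ℤ) j
  rw [h4]
  omega

end CoinsAux
namespace CoinsAux

/-- row sums as card difference -/
lemma rowsum_eq {n : ℕ} (r : Fin n → ℤ) (h : ∀ i, r i = -1 ∨ r i = 0 ∨ r i = 1) :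
    ∑ i, r i = ((Finset.univ.filter (fun i => r i = 1)).card : ℤ)
      - ((Finset.univ.filter (fun i => r i = -1)).card : ℤ) := by
  classical
  have : ∀ i, r i = (if r i = 1 then (1:ℤ) else 0) - (if r i = -1 then (1:ℤ) else 0) := by
    intro i
    rcases h i with h'|h'|h' <;> simp [h']
  rw [Finset.sum_congr rfl (fun i _ => this i), Finset.sum_sub_distrib]
  simp [Finset.sum_ite_eq, Finset.sum_boole]

lemma balanced_rowsum {k n : ℕ} {M : Fin k → Fin n → ℤ} (hS : IsScheme M) (hB : IsBalanced M)
    (j : Fin k) : ∑ i, M j i = 0 := by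
  rw [rowsum_eq (M j) (fun i => by have := hS j i; simpa using this), hB j]
  ring

lemma outcome_eq {k n : ℕ} {M : Fin k → Fin n → ℤ} (hS : IsScheme M) (hB : IsBalanced M)
    {g : ℝ} {c : Fin n} {w : Fin n → ℝ} (hW : ∀ i, i ≠ c → w i = g) (j : Fin k) :
    ∑ i, (M j i : ℝ) * w i = (M j c : ℝ) * (w c - g) := by
  have h1 : ∑ i, (M j i : ℝ) * w i = ∑ i, (M j i : ℝ) * (w i - g) + (∑ i, (M j i : ℝ)) * g := by
    rw [Finset.sum_mul, ← Finset.sum_add_distrib]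
    apply Finset.sum_congr rfl
    intro i _
    ring
  have h2 : (∑ i, (M j i : ℝ)) = 0 := by
    have := balanced_rowsum hS hB j
    exact_mod_cast this
  rw [h1, h2, zero_mul, add_zero]
  rw [Finset.sum_eq_single c]
  · intro i _ hi
    rw [hW i hi]
    ring
  · intro h; exact absurd (Finset.mem_univ c) h

lemma sign_int_mul {a : ℤ} (h : a = -1 ∨ a = 0 ∨ a = 1) (d : ℝ) :
    Real.sign ((a:ℝ) * d) = (a:ℝ) * Real.sign d := by
  rcases h with rfl|rfl|rfl
  · push_cast
    rw [neg_one_mul, neg_one_mul, Real.sign_neg]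
  · simp [Real.sign_zero]
  · simp

lemma sign_ne_zero {d : ℝ} (h : d ≠ 0) : Real.sign d = 1 ∨ Real.sign d = -1 := by
  rcases lt_or_gt_of_ne h with h'|h'
  · right; exact Real.sign_of_neg h'
  · left; exact Real.sign_of_pos h'

/-- the combinatorial condition is sufficient -/
lemma identifies_of {k n : ℕ} {M : Fin k → Fin n → ℤ} (hS : IsScheme M) (hB : IsBalanced M)
    (hinj : ∀ c c' : Fin n, (∀ j, M j c = M j c') → c = c')
    (hneg : ∀ c c' : Fin n, ¬ (∀ j, M j c = - M j c')) :
    Identifies M := by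
  intro g c w g' c' w' hsc hsc' hout
  set d := w c - g with hd
  set d' := w' c' - g' with hd'
  have hdne : d ≠ 0 := sub_ne_zero_of_ne hsc.2
  have hdne' : d' ≠ 0 := sub_ne_zero_of_ne hsc'.2
  have key : ∀ j, (M j c : ℝ) * Real.sign d = (M j c' : ℝ) * Real.sign d' := by
    intro j
    have h1 := outcome_eq hS hB hsc.1 j
    have h2 := outcome_eq hS hB hsc'.1 j
    have := hout j
    rw [h1, h2] at this
    rw [← sign_int_mul (by have := hS j c; simpa using this) d,
        ← sign_int_mul (by have := hS j c'; simpa using this) d']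
    exact this
  rcases sign_ne_zero hdne with hs|hs <;> rcases sign_ne_zero hdne' with hs'|hs'
  · have hcc : c = c' := by
      apply hinj
      intro j
      have := key j
      rw [hs, hs'] at this
      simp only [mul_one] at this
      exact_mod_cast this
    exact ⟨hcc, by rw [hs, hs']⟩
  · exfalso
    apply hneg c c'
    intro j
    have := key j
    rw [hs, hs'] at this
    have : (M j c : ℝ) = -(M j c' : ℝ) := by linarith [this]
    exact_mod_cast this
  · exfalso
    apply hneg c c'
    intro j
    have := key j
    rw [hs, hs'] at this
    have : (M j c : ℝ) = -(M j c' : ℝ) := by linarith [this]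
    exact_mod_cast this
  · have hcc : c = c' := by
      apply hinj
      intro j
      have := key j
      rw [hs, hs'] at this
      have : (M j c : ℝ) = (M j c' : ℝ) := by linarith [this]
      exact_mod_cast this
    exact ⟨hcc, by rw [hs, hs']⟩

/-- the combinatorial condition is necessary -/
lemma conditions_of {k n : ℕ} {M : Fin k → Fin n → ℤ} (hS : IsScheme M) (hB : IsBalanced M)
    (hI : Identifies M) :
    (∀ c c' : Fin n, (∀ j, M j c = M j c') → c = c') ∧
    (∀ c c' : Fin n, ¬ (∀ j, M j c = - M j c')) := by
  classical
  have scen : ∀ (c : Fin n) (s : ℝ), s ≠ 0 →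
      IsScenario 0 c (fun i => if i = c then s else 0) := by
    intro c s hs
    constructor
    · intro i hi; simp [hi]
    · simpa using hs
  have outc : ∀ (c : Fin n) (s : ℝ) (j : Fin k),
      Real.sign (∑ i, (M j i : ℝ) * (fun i => if i = c then s else 0) i)
        = (M j c : ℝ) * Real.sign s := by
    intro c s j
    have hW : ∀ i, i ≠ c → (fun i => if i = c then s else 0) i = (0:ℝ) := fun i hi => by simp [hi]
    rw [outcome_eq hS hB hW j]
    have heq : ((fun i => if i = c then s else 0) c - 0) = s := by simp
    rw [heq]
    exact sign_int_mul (by have := hS j c; simpa using this) s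
  constructor
  · intro c c' hcc
    have := hI 0 c (fun i => if i = c then 1 else 0) 0 c' (fun i => if i = c' then 1 else 0)
      (scen c 1 one_ne_zero) (scen c' 1 one_ne_zero) ?_
    · exact this.1
    · intro j
      rw [outc c 1 j, outc c' 1 j, hcc j]
  · intro c c' hcc
    have := hI 0 c (fun i => if i = c then 1 else 0) 0 c' (fun i => if i = c' then -1 else 0)
      (scen c 1 one_ne_zero) (scen c' (-1) (by norm_num)) ?_
    · obtain ⟨h1, h2⟩ := this
      norm_num [Real.sign_one, Real.sign_neg] at h2
    · intro j
      rw [outc c 1 j, outc c' (-1) j, hcc j]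
      push_cast
      rw [Real.sign_neg]
      ring

end CoinsAux

namespace CoinsAux

def oneV (k : ℕ) : Fin k → ℤ := fun _ => 1

lemma neg_cons {k : ℕ} (x : ℤ) (u : Fin k → ℤ) :
    -(Fin.cons x u) = (Fin.cons (-x) (-u) : Fin (k+1) → ℤ) := by
  funext j
  rcases Fin.eq_zero_or_eq_succ j with rfl | ⟨i, rfl⟩ <;> simp

lemma cons_eq_cons {k : ℕ} {x y : ℤ} {u v : Fin k → ℤ} :
    (Fin.cons x u : Fin (k+1) → ℤ) = Fin.cons y v ↔ x = y ∧ u = v := by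
  constructor
  · intro h
    constructor
    · exact congrFun h 0
    · funext i; exact congrFun h i.succ
  · rintro ⟨rfl, rfl⟩; rfl

lemma zero_eq_cons {k : ℕ} : (0 : Fin (k+1) → ℤ) = Fin.cons 0 0 := by
  funext j
  rcases Fin.eq_zero_or_eq_succ j with rfl | ⟨i, rfl⟩ <;> simp

lemma oneV_succ {k : ℕ} : oneV (k+1) = Fin.cons 1 (oneV k) := by
  funext j
  rcases Fin.eq_zero_or_eq_succ j with rfl | ⟨i, rfl⟩ <;> simp [oneV]

lemma neg_oneV_succ {k : ℕ} : -oneV (k+1) = Fin.cons (-1) (-oneV k) := by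
  rw [oneV_succ, neg_cons]

lemma cons_mem_Vset {k : ℕ} {x : ℤ} {u : Fin k → ℤ} (hx : x = -1 ∨ x = 0 ∨ x = 1)
    (hu : u ∈ Vset k) : (Fin.cons x u : Fin (k+1) → ℤ) ∈ Vset (k+1) := by
  rw [mem_Vset] at hu ⊢
  intro j
  rcases Fin.eq_zero_or_eq_succ j with rfl | ⟨i, rfl⟩
  · simpa using hx
  · simpa using hu i

lemma cons_self_tail_mem {k : ℕ} {w : Fin (k+1) → ℤ} (hw : w ∈ Vset (k+1)) :
    w = Fin.cons (w 0) (Fin.tail w) ∧ (w 0 = -1 ∨ w 0 = 0 ∨ w 0 = 1) ∧ Fin.tail w ∈ Vset k := by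
  refine ⟨(Fin.cons_self_tail w).symm, (mem_Vset.1 hw) 0, ?_⟩
  rw [mem_Vset]
  intro j
  exact (mem_Vset.1 hw) j.succ

lemma sum_cons_eq {k : ℕ} {α : Type*} [DecidableEq α] (s : Finset α) (g : α → ℤ) (f : α → Fin k → ℤ) :
    ∑ u ∈ s, (Fin.cons (g u) (f u) : Fin (k+1) → ℤ) = Fin.cons (∑ u ∈ s, g u) (∑ u ∈ s, f u) := by
  funext j
  rw [Finset.sum_apply]
  rcases Fin.eq_zero_or_eq_succ j with rfl | ⟨i, rfl⟩
  · simp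
  · simp [Finset.sum_apply]

structure Good (k : ℕ) (T : Finset (Fin k → ℤ)) : Prop where
  subV : T ⊆ Vset k
  negdisj : ∀ v ∈ T, -v ∉ T
  classes : ∀ v, (v ∈ T ∨ -v ∈ T) ↔ (v ∈ Vset k ∧ v ≠ 0 ∧ v ≠ oneV k ∧ v ≠ -oneV k)
  sum0 : ∑ v ∈ T, v = 0

lemma good_one : Good 1 ∅ := by
  refine ⟨by simp, by simp, ?_, by simp⟩
  intro v
  simp only [Finset.notMem_empty, or_self, false_iff, not_and, not_not]
  intro hv h0 h1
  rw [mem_Vset] at hv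
  rcases hv 0 with h|h|h
  · funext j
    have : j = 0 := Subsingleton.elim _ _
    subst this
    simp [oneV, h]
  · exfalso; apply h0; funext j; have : j = 0 := Subsingleton.elim _ _; subst this; exact h
  · exfalso; apply h1; funext j; have : j = 0 := Subsingleton.elim _ _; subst this; simpa [oneV] using h

end CoinsAux

namespace CoinsAux

lemma oneV_ne_zero {k : ℕ} (hk : 1 ≤ k) : oneV k ≠ 0 := by
  intro h
  have := congrFun h ⟨0, hk⟩
  simp [oneV] at this

lemma neg_oneV_ne_zero {k : ℕ} (hk : 1 ≤ k) : -oneV k ≠ 0 := by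
  intro h
  have := congrFun h ⟨0, hk⟩
  simp [oneV] at this

lemma oneV_ne_neg_oneV {k : ℕ} (hk : 1 ≤ k) : oneV k ≠ -oneV k := by
  intro h
  have := congrFun h ⟨0, hk⟩
  simp [oneV] at this

lemma oneV_mem_Vset {k : ℕ} : oneV k ∈ Vset k := mem_Vset.2 (fun j => by simp [oneV])

lemma neg_oneV_mem_Vset {k : ℕ} : -oneV k ∈ Vset k := neg_mem_Vset oneV_mem_Vset

lemma zero_mem_Vset {k : ℕ} : (0 : Fin k → ℤ) ∈ Vset k := mem_Vset.2 (fun j => by simp)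

lemma oneV_mem_Pset {k : ℕ} (hk : 1 ≤ k) : oneV k ∈ Pset k := by
  rw [Pset, Finset.mem_filter]
  refine ⟨oneV_mem_Vset, ?_⟩
  have h1 : enc (oneV k) = ∑ j : Fin k, 3 ^ (j:ℕ) := by simp [enc, oneV]
  rw [h1]
  haveI : Nonempty (Fin k) := ⟨⟨0, hk⟩⟩
  exact Finset.sum_pos (fun j _ => pow_pos (by norm_num) _) Finset.univ_nonempty

lemma exists_A (k : ℕ) (hk : 1 ≤ k) : ∃ A : Finset (Fin k → ℤ),
    A ⊆ Vset k ∧ oneV k ∉ A ∧ 2 * A.card + 1 = 3 ^ k ∧ ∑ v ∈ A, v = -oneV k := by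
  classical
  set m := (Pset k).card with hm
  have hm3 : 2 * m + 1 = 3 ^ k := card_Pset k
  have h3 : 3 ≤ 3 ^ k := by
    calc (3:ℕ) = 3 ^ 1 := rfl
    _ ≤ 3 ^ k := Nat.pow_le_pow_right (by norm_num) hk
  have hm1 : 1 ≤ m := by omega
  have honeP : oneV k ∈ Pset k := oneV_mem_Pset hk
  have hPsub : Pset k ⊆ Vset k := Finset.filter_subset _ _
  obtain ⟨Q, hQsub, hQcard⟩ := Finset.exists_subset_card_eq (s := (Pset k).erase (oneV k)) (n := (m-1)/2)
    (by rw [Finset.card_erase_of_mem honeP]; omega)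
  have hQP : Q ⊆ Pset k := hQsub.trans (Finset.erase_subset _ _)
  have hQenc : ∀ v ∈ Q, 0 < enc v := fun v hv => (Finset.mem_filter.1 (hQP hv)).2
  have hQV : Q ⊆ Vset k := hQP.trans hPsub
  set N := Q.image Neg.neg with hN
  have hNenc : ∀ v ∈ N, enc v < 0 := by
    intro v hv
    obtain ⟨u, hu, rfl⟩ := Finset.mem_image.1 hv
    rw [enc_neg]
    have := hQenc u hu
    omega
  have hNV : N ⊆ Vset k := by
    intro v hv
    obtain ⟨u, hu, rfl⟩ := Finset.mem_image.1 hv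
    exact neg_mem_Vset (hQV hu)
  have hdisjQN : Disjoint Q N := by
    rw [Finset.disjoint_left]
    intro v hvQ hvN
    have := hQenc v hvQ
    have := hNenc v hvN
    omega
  have hsumQN : ∑ v ∈ Q ∪ N, v = 0 := by
    rw [Finset.sum_union hdisjQN, hN, Finset.sum_image (fun a _ b _ h => neg_injective h)]
    rw [Finset.sum_neg_distrib]
    ring
  have hcardQN : (Q ∪ N).card = 2 * ((m-1)/2) := by
    rw [Finset.card_union_of_disjoint hdisjQN, hN,
      Finset.card_image_of_injective _ neg_injective, hQcard]
    ring
  have h0QN : (0 : Fin k → ℤ) ∉ Q ∪ N := by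
    intro h
    rcases Finset.mem_union.1 h with h|h
    · have := hQenc _ h; rw [enc_zero] at this; omega
    · have := hNenc _ h; rw [enc_zero] at this; omega
  have honeQN : -oneV k ∉ Q ∪ N := by
    intro h
    rcases Finset.mem_union.1 h with h|h
    · have := hQenc _ h
      have h2 := (Finset.mem_filter.1 (oneV_mem_Pset hk)).2
      rw [enc_neg] at this
      omega
    · obtain ⟨u, hu, huu⟩ := Finset.mem_image.1 h
      have : u = oneV k := by
        have := congrArg Neg.neg huu
        simpa using this
      subst this
      exact (Finset.notMem_erase _ _) (hQsub hu)
  set W0 : Finset (Fin k → ℤ) := if (m-1) % 2 = 1 then {0} else ∅ with hW0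
  have hW0sub : W0 ⊆ Vset k := by
    rw [hW0]; split
    · intro v hv; rw [Finset.mem_singleton] at hv; subst hv; exact zero_mem_Vset
    · intro v hv; simp at hv
  have hW0card : W0.card = (m-1) % 2 := by
    rw [hW0]; split <;> simp_all
  have hW0sum : ∑ v ∈ W0, v = 0 := by
    rw [hW0]; split <;> simp
  have hW0mem : ∀ v ∈ W0, v = 0 := by
    rw [hW0]; split
    · intro v hv; rwa [Finset.mem_singleton] at hv
    · intro v hv; simp at hv
  refine ⟨insert (-oneV k) (W0 ∪ (Q ∪ N)), ?_, ?_, ?_, ?_⟩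
  · intro v hv
    rcases Finset.mem_insert.1 hv with rfl|hv
    · exact neg_oneV_mem_Vset
    · rcases Finset.mem_union.1 hv with h|h
      · exact hW0sub h
      · rcases Finset.mem_union.1 h with h|h
        · exact hQV h
        · exact hNV h
  · intro h
    rcases Finset.mem_insert.1 h with h|h
    · exact oneV_ne_neg_oneV hk h
    · rcases Finset.mem_union.1 h with h|h
      · exact oneV_ne_zero hk (hW0mem _ h)
      · rcases Finset.mem_union.1 h with h|h
        · exact (Finset.notMem_erase _ _) (hQsub h)
        · have := hNenc _ h
          have h2 := (Finset.mem_filter.1 (oneV_mem_Pset hk)).2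
          omega
  · have hnotin : -oneV k ∉ W0 ∪ (Q ∪ N) := by
      intro h
      rcases Finset.mem_union.1 h with h|h
      · exact neg_oneV_ne_zero hk (hW0mem _ h)
      · exact honeQN h
    have hdisjW : Disjoint W0 (Q ∪ N) := by
      rw [Finset.disjoint_left]
      intro v hv hv2
      rw [hW0mem _ hv] at hv2
      exact h0QN hv2
    rw [Finset.card_insert_of_notMem hnotin, Finset.card_union_of_disjoint hdisjW,
      hW0card, hcardQN]
    omega
  · have hnotin : -oneV k ∉ W0 ∪ (Q ∪ N) := by
      intro h
      rcases Finset.mem_union.1 h with h|h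
      · exact neg_oneV_ne_zero hk (hW0mem _ h)
      · exact honeQN h
    have hdisjW : Disjoint W0 (Q ∪ N) := by
      rw [Finset.disjoint_left]
      intro v hv hv2
      rw [hW0mem _ hv] at hv2
      exact h0QN hv2
    rw [Finset.sum_insert hnotin, Finset.sum_union hdisjW, hW0sum, hsumQN]
    ring

end CoinsAux

namespace CoinsAux

lemma cons_add {k : ℕ} (x y : ℤ) (u v : Fin k → ℤ) :
    (Fin.cons x u : Fin (k+1) → ℤ) + Fin.cons y v = Fin.cons (x+y) (u+v) := by
  funext j
  rcases Fin.eq_zero_or_eq_succ j with rfl | ⟨i, rfl⟩ <;> simp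

lemma sum_cons_id {k : ℕ} (s : Finset (Fin k → ℤ)) (x : ℤ) :
    ∑ u ∈ s, (Fin.cons x u : Fin (k+1) → ℤ) = Fin.cons ((s.card : ℤ) * x) (∑ u ∈ s, u) := by
  funext j
  rw [Finset.sum_apply]
  rcases Fin.eq_zero_or_eq_succ j with rfl | ⟨i, rfl⟩
  · simp [mul_comm]
  · simp [Finset.sum_apply]

lemma sum_cons_negt {k : ℕ} (s : Finset (Fin k → ℤ)) (x : ℤ) :
    ∑ u ∈ s, (Fin.cons x (-u) : Fin (k+1) → ℤ) = Fin.cons ((s.card : ℤ) * x) (-∑ u ∈ s, u) := by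
  funext j
  rw [Finset.sum_apply]
  rcases Fin.eq_zero_or_eq_succ j with rfl | ⟨i, rfl⟩
  · simp [mul_comm]
  · simp [Finset.sum_apply]

lemma good_step (k : ℕ) (hk : 1 ≤ k) (T : Finset (Fin k → ℤ)) (hT : Good k T) :
    ∃ T' : Finset (Fin (k+1) → ℤ), Good (k+1) T' := by
  classical
  obtain ⟨A, hAV, honeA, hAcard, hAsum⟩ := exists_A k hk
  set m := A.card with hmdef
  have hAsub : A ⊆ (Vset k).erase (oneV k) := by
    intro v hv
    rw [Finset.mem_erase]
    exact ⟨fun h => honeA (h ▸ hv), hAV hv⟩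
  set B := ((Vset k).erase (oneV k)) \ A with hBdef
  have hBV : B ⊆ Vset k := (Finset.sdiff_subset).trans (Finset.erase_subset _ _)
  have hBone : oneV k ∉ B := fun h => (Finset.notMem_erase _ _) (Finset.mem_sdiff.1 h).1
  have hdisjAB : Disjoint A B := Finset.disjoint_sdiff
  have hunionAB : A ∪ B = (Vset k).erase (oneV k) := Finset.union_sdiff_of_subset hAsub
  have hcard_erase : ((Vset k).erase (oneV k)).card = 3 ^ k - 1 := by
    rw [Finset.card_erase_of_mem oneV_mem_Vset, card_Vset]
  have hBcard : B.card = m := by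
    have h1 := Finset.card_union_of_disjoint hdisjAB
    rw [hunionAB, hcard_erase] at h1
    omega
  have hsum_erase : ∑ v ∈ (Vset k).erase (oneV k), v = -oneV k := by
    have h := Finset.sum_erase_eq_sub (f := id) (oneV_mem_Vset (k := k))
    simp only [id] at h
    rw [h, sum_Vset_zero]
    simp
  have hBsum : ∑ v ∈ B, v = 0 := by
    have h := Finset.sum_union hdisjAB (f := id)
    simp only [id] at h
    rw [hunionAB, hsum_erase, hAsum] at h
    exact left_eq_add.mp h
  have hTfacts : ∀ v ∈ T, v ∈ Vset k ∧ v ≠ 0 ∧ v ≠ oneV k ∧ v ≠ -oneV k := by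
    intro v hv
    exact (hT.classes v).1 (Or.inl hv)
  have honeT : oneV k ∉ T := fun h => (hTfacts _ h).2.2.1 rfl
  have hnoneT : -oneV k ∉ T := fun h => (hTfacts _ h).2.2.2 rfl
  set P1 := T.image (fun u => (Fin.cons 0 u : Fin (k+1) → ℤ)) with hP1
  set P2 : Finset (Fin (k+1) → ℤ) := {Fin.cons 0 (-oneV k)} with hP2
  set P3 := A.image (fun u => (Fin.cons (-1) (-u) : Fin (k+1) → ℤ)) with hP3
  set P4 := B.image (fun u => (Fin.cons 1 u : Fin (k+1) → ℤ)) with hP4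
  set T' := ((P1 ∪ P2) ∪ P3) ∪ P4 with hT'
  have hmemP1 : ∀ u ∈ T, (Fin.cons 0 u : Fin (k+1) → ℤ) ∈ T' := by
    intro u hu
    apply Finset.mem_union_left; apply Finset.mem_union_left; apply Finset.mem_union_left
    exact Finset.mem_image_of_mem _ hu
  have hmemP2 : (Fin.cons 0 (-oneV k) : Fin (k+1) → ℤ) ∈ T' := by
    apply Finset.mem_union_left; apply Finset.mem_union_left; apply Finset.mem_union_right
    simp [hP2]
  have hmemP3 : ∀ u ∈ A, (Fin.cons (-1) (-u) : Fin (k+1) → ℤ) ∈ T' := by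
    intro u hu
    apply Finset.mem_union_left; apply Finset.mem_union_right
    exact Finset.mem_image_of_mem _ hu
  have hmemP4 : ∀ u ∈ B, (Fin.cons 1 u : Fin (k+1) → ℤ) ∈ T' := by
    intro u hu
    apply Finset.mem_union_right
    exact Finset.mem_image_of_mem _ hu
  have decomp : ∀ v ∈ T', (∃ u ∈ T, v = Fin.cons 0 u) ∨ (v = Fin.cons 0 (-oneV k)) ∨
      (∃ u ∈ A, v = Fin.cons (-1) (-u)) ∨ (∃ u ∈ B, v = Fin.cons 1 u) := by
    intro v hv
    rcases Finset.mem_union.1 hv with h | h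
    · rcases Finset.mem_union.1 h with h | h
      · rcases Finset.mem_union.1 h with h | h
        · obtain ⟨u, hu, rfl⟩ := Finset.mem_image.1 h
          exact Or.inl ⟨u, hu, rfl⟩
        · rw [hP2, Finset.mem_singleton] at h
          exact Or.inr (Or.inl h)
      · obtain ⟨u, hu, rfl⟩ := Finset.mem_image.1 h
        exact Or.inr (Or.inr (Or.inl ⟨u, hu, rfl⟩))
    · obtain ⟨u, hu, rfl⟩ := Finset.mem_image.1 h
      exact Or.inr (Or.inr (Or.inr ⟨u, hu, rfl⟩))
  have hfwd : ∀ w ∈ T', (w ∈ Vset (k+1) ∧ w ≠ 0 ∧ w ≠ oneV (k+1) ∧ w ≠ -oneV (k+1)) := by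
    intro w hw
    rcases decomp w hw with ⟨u, hu, rfl⟩ | rfl | ⟨u, hu, rfl⟩ | ⟨u, hu, rfl⟩
    · obtain ⟨huV, hu0, hu1, hun1⟩ := hTfacts u hu
      refine ⟨cons_mem_Vset (by norm_num) huV, ?_, ?_, ?_⟩
      · rw [zero_eq_cons]; intro h; exact hu0 (cons_eq_cons.1 h.symm).2.symm
      · rw [oneV_succ]; intro h; have := (cons_eq_cons.1 h).1; norm_num at this
      · rw [neg_oneV_succ]; intro h; have := (cons_eq_cons.1 h).1; norm_num at this
    · refine ⟨cons_mem_Vset (by norm_num) neg_oneV_mem_Vset, ?_, ?_, ?_⟩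
      · rw [zero_eq_cons]; intro h
        exact neg_oneV_ne_zero hk (cons_eq_cons.1 h).2
      · rw [oneV_succ]; intro h; have := (cons_eq_cons.1 h).1; norm_num at this
      · rw [neg_oneV_succ]; intro h; have := (cons_eq_cons.1 h).1; norm_num at this
    · refine ⟨cons_mem_Vset (by norm_num) (neg_mem_Vset (hAV hu)), ?_, ?_, ?_⟩
      · rw [zero_eq_cons]; intro h; have := (cons_eq_cons.1 h).1; norm_num at this
      · rw [oneV_succ]; intro h; have := (cons_eq_cons.1 h).1; norm_num at this
      · rw [neg_oneV_succ]; intro h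
        have h2 := (cons_eq_cons.1 h).2
        exact honeA ((neg_injective h2) ▸ hu)
    · refine ⟨cons_mem_Vset (by norm_num) (hBV hu), ?_, ?_, ?_⟩
      · rw [zero_eq_cons]; intro h; have := (cons_eq_cons.1 h).1; norm_num at this
      · rw [oneV_succ]; intro h
        have h2 := (cons_eq_cons.1 h).2
        exact hBone (h2 ▸ hu)
      · rw [neg_oneV_succ]; intro h; have := (cons_eq_cons.1 h).1; norm_num at this
  have hRHS_neg : ∀ w : Fin (k+1) → ℤ,
      ((-w) ∈ Vset (k+1) ∧ -w ≠ 0 ∧ -w ≠ oneV (k+1) ∧ -w ≠ -oneV (k+1)) →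
      (w ∈ Vset (k+1) ∧ w ≠ 0 ∧ w ≠ oneV (k+1) ∧ w ≠ -oneV (k+1)) := by
    rintro w ⟨h1, h2, h3, h4⟩
    refine ⟨by simpa using neg_mem_Vset h1, ?_, ?_, ?_⟩
    · intro h; subst h; simp at h2
    · intro h; exact h4 (by rw [h])
    · intro h; exact h3 (by rw [h, neg_neg])
  refine ⟨T', ?_, ?_, ?_, ?_⟩
  · intro w hw
    exact (hfwd w hw).1
  · -- negdisj
    intro w hw hnw
    rcases decomp w hw with ⟨u, hu, rfl⟩ | rfl | ⟨u, hu, rfl⟩ | ⟨u, hu, rfl⟩ <;>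
      rcases decomp _ hnw with ⟨u', hu', he⟩ | he | ⟨u', hu', he⟩ | ⟨u', hu', he⟩ <;>
      rw [neg_cons] at he
    · obtain ⟨_, h2⟩ := cons_eq_cons.1 he
      rw [← h2] at hu'
      exact hT.negdisj u hu hu'
    · obtain ⟨_, h2⟩ := cons_eq_cons.1 he
      have h3 : u = oneV k := by
        have := congrArg Neg.neg h2
        simpa using this
      rw [h3] at hu
      exact honeT hu
    · have := (cons_eq_cons.1 he).1; norm_num at this
    · have := (cons_eq_cons.1 he).1; norm_num at this
    · obtain ⟨_, h2⟩ := cons_eq_cons.1 he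
      have h3 : u' = oneV k := by
        have := h2.symm
        simpa using this
      rw [h3] at hu'
      exact honeT hu'
    · obtain ⟨_, h2⟩ := cons_eq_cons.1 he
      have h3 : oneV k = -oneV k := by simpa using h2
      exact oneV_ne_neg_oneV hk h3
    · have := (cons_eq_cons.1 he).1; norm_num at this
    · have := (cons_eq_cons.1 he).1; norm_num at this
    · have := (cons_eq_cons.1 he).1; norm_num at this
    · have := (cons_eq_cons.1 he).1; norm_num at this
    · have := (cons_eq_cons.1 he).1; norm_num at this
    · obtain ⟨_, h2⟩ := cons_eq_cons.1 he
      have h3 : u = u' := by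
        have := congrArg Neg.neg h2
        simpa using this
      rw [h3] at hu
      exact Finset.disjoint_left.1 hdisjAB hu hu'
    · have := (cons_eq_cons.1 he).1; norm_num at this
    · have := (cons_eq_cons.1 he).1; norm_num at this
    · obtain ⟨_, h2⟩ := cons_eq_cons.1 he
      have h3 : u = u' := neg_injective h2
      rw [h3] at hu
      exact Finset.disjoint_left.1 hdisjAB hu' hu
    · have := (cons_eq_cons.1 he).1; norm_num at this
  · -- classes
    intro w
    constructor
    · rintro (hw | hw)
      · exact hfwd w hw
      · exact hRHS_neg w (hfwd _ hw)
    · rintro ⟨hwV, hw0, hw1, hwn1⟩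
      obtain ⟨hrep, hhead, htail⟩ := cons_self_tail_mem hwV
      rcases hhead with hh | hh | hh
      · -- head = -1
        set u' := -(Fin.tail w) with hu'def
        have hu'V : u' ∈ Vset k := neg_mem_Vset htail
        have hune : u' ≠ oneV k := by
          intro h
          apply hwn1
          rw [hrep, hh, neg_oneV_succ]
          have : Fin.tail w = -oneV k := by
            have := congrArg Neg.neg h
            simpa [hu'def] using this
          rw [this]
        have hAB : u' ∈ A ∪ B := by
          rw [hunionAB, Finset.mem_erase]
          exact ⟨hune, hu'V⟩
        rcases Finset.mem_union.1 hAB with h | h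
        · left
          have : w = Fin.cons (-1) (-u') := by
            rw [hu'def, neg_neg, ← hh]
            exact hrep
          rw [this]
          exact hmemP3 _ h
        · right
          have : -w = Fin.cons 1 u' := by
            rw [hrep, hh, neg_cons]
            norm_num
            exact hu'def.symm
          rw [this]
          exact hmemP4 _ h
      · -- head = 0
        have hu0 : Fin.tail w ≠ 0 := by
          intro h
          apply hw0
          rw [hrep, hh, h, ← zero_eq_cons]
        by_cases h1 : Fin.tail w = -oneV k
        · left
          rw [hrep, hh, h1]
          exact hmemP2
        · by_cases h2 : Fin.tail w = oneV k
          · right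
            have : -w = Fin.cons 0 (-oneV k) := by
              rw [hrep, hh, h2, neg_cons, neg_zero]
            rw [this]
            exact hmemP2
          · rcases (hT.classes (Fin.tail w)).2 ⟨htail, hu0, h2, h1⟩ with h | h
            · left
              rw [hrep, hh]
              exact hmemP1 _ h
            · right
              have : -w = Fin.cons 0 (-(Fin.tail w)) := by
                nth_rewrite 1 [hrep]
                rw [hh, neg_cons, neg_zero]
              rw [this]
              exact hmemP1 _ h
      · -- head = 1
        have hune : Fin.tail w ≠ oneV k := by
          intro h
          apply hw1
          rw [hrep, hh, h, oneV_succ]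
        have hAB : Fin.tail w ∈ A ∪ B := by
          rw [hunionAB, Finset.mem_erase]
          exact ⟨hune, htail⟩
        rcases Finset.mem_union.1 hAB with h | h
        · right
          have : -w = Fin.cons (-1) (-(Fin.tail w)) := by
            nth_rewrite 1 [hrep]
            rw [hh, neg_cons]
          rw [this]
          exact hmemP3 _ h
        · left
          rw [hrep, hh]
          exact hmemP4 _ h
  · -- sum0
    have hd12 : Disjoint P1 P2 := by
      rw [Finset.disjoint_right]
      intro w hw2 hw1
      rw [hP2, Finset.mem_singleton] at hw2
      obtain ⟨u, hu, huw⟩ := Finset.mem_image.1 hw1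
      rw [hw2] at huw
      have := (cons_eq_cons.1 huw).2
      rw [this] at hu
      exact hnoneT hu
    have head12 : ∀ w ∈ P1 ∪ P2, w 0 = 0 := by
      intro w hw
      rcases Finset.mem_union.1 hw with h | h
      · obtain ⟨u, hu, rfl⟩ := Finset.mem_image.1 h
        simp
      · rw [hP2, Finset.mem_singleton] at h
        rw [h]
        simp
    have head3 : ∀ w ∈ P3, w 0 = -1 := by
      intro w hw
      obtain ⟨u, hu, rfl⟩ := Finset.mem_image.1 hw
      simp
    have head4 : ∀ w ∈ P4, w 0 = 1 := by
      intro w hw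
      obtain ⟨u, hu, rfl⟩ := Finset.mem_image.1 hw
      simp
    have hd3 : Disjoint (P1 ∪ P2) P3 := by
      rw [Finset.disjoint_left]
      intro w hw hw3
      have := head12 w hw
      have := head3 w hw3
      omega
    have hd4 : Disjoint ((P1 ∪ P2) ∪ P3) P4 := by
      rw [Finset.disjoint_left]
      intro w hw hw4
      have h4 := head4 w hw4
      rcases Finset.mem_union.1 hw with h | h
      · have := head12 w h; omega
      · have := head3 w h; omega
    rw [hT', Finset.sum_union hd4, Finset.sum_union hd3, Finset.sum_union hd12]
    have hs1 : ∑ v ∈ P1, v = Fin.cons (0:ℤ) (0 : Fin k → ℤ) := by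
      rw [hP1, Finset.sum_image (fun a _ b _ h => (cons_eq_cons.1 h).2)]
      rw [sum_cons_id T 0, hT.sum0, mul_zero]
    have hs2 : ∑ v ∈ P2, v = Fin.cons 0 (-oneV k) := by
      rw [hP2, Finset.sum_singleton]
    have hs3 : ∑ v ∈ P3, v = Fin.cons (-(m:ℤ)) (oneV k) := by
      rw [hP3, Finset.sum_image (fun a ha b hb h => neg_injective (cons_eq_cons.1 h).2)]
      rw [sum_cons_negt A (-1)]
      exact cons_eq_cons.2 ⟨by rw [hmdef]; ring, by rw [hAsum, neg_neg]⟩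
    have hs4 : ∑ v ∈ P4, v = Fin.cons ((m:ℤ)) (0 : Fin k → ℤ) := by
      rw [hP4, Finset.sum_image (fun a ha b hb h => (cons_eq_cons.1 h).2)]
      rw [sum_cons_id B 1, hBsum, hBcard, mul_one]
    rw [hs1, hs2, hs3, hs4, cons_add, cons_add, cons_add, zero_eq_cons]
    exact cons_eq_cons.2 ⟨by ring, by ring⟩

end CoinsAux

namespace CoinsAux

lemma good_exists (k : ℕ) (hk : 1 ≤ k) : ∃ T : Finset (Fin k → ℤ), Good k T := by
  induction k with
  | zero => omega
  | succ n ih =>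
    rcases Nat.eq_or_lt_of_le hk with h | h
    · refine ⟨∅, ?_⟩
      have : n = 0 := by omega
      subst this
      exact good_one
    · have hn : 1 ≤ n := by omega
      obtain ⟨T, hT⟩ := ih hn
      exact good_step n hn T hT

lemma good_card {k : ℕ} (hk : 1 ≤ k) {T : Finset (Fin k → ℤ)} (hT : Good k T) :
    2 * T.card + 3 = 3 ^ k := by
  classical
  have key : T ∪ T.image Neg.neg = (Vset k) \ {0, oneV k, -oneV k} := by
    ext w
    rw [Finset.mem_union, Finset.mem_sdiff]
    have himg : w ∈ T.image Neg.neg ↔ -w ∈ T := by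
      rw [Finset.mem_image]
      constructor
      · rintro ⟨u, hu, rfl⟩; simpa using hu
      · intro h; exact ⟨-w, h, by simp⟩
    rw [himg, hT.classes w]
    simp only [Finset.mem_insert, Finset.mem_singleton]
    tauto
  have hdisj : Disjoint T (T.image Neg.neg) := by
    rw [Finset.disjoint_left]
    intro w hw hw2
    rw [Finset.mem_image] at hw2
    obtain ⟨u, hu, rfl⟩ := hw2
    exact hT.negdisj u hu (by simpa using hw)
  have hcardU := Finset.card_union_of_disjoint hdisj
  rw [key, Finset.card_image_of_injective _ neg_injective] at hcardU
  have hsub : ({0, oneV k, -oneV k} : Finset (Fin k → ℤ)) ⊆ Vset k := by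
    intro w hw
    simp only [Finset.mem_insert, Finset.mem_singleton] at hw
    rcases hw with rfl | rfl | rfl
    · exact zero_mem_Vset
    · exact oneV_mem_Vset
    · exact neg_oneV_mem_Vset
  have hc3 : ({0, oneV k, -oneV k} : Finset (Fin k → ℤ)).card = 3 := by
    rw [Finset.card_insert_of_notMem, Finset.card_insert_of_notMem, Finset.card_singleton]
    · simp only [Finset.mem_singleton]
      exact oneV_ne_neg_oneV hk
    · simp only [Finset.mem_insert, Finset.mem_singleton]
      push_neg
      exact ⟨(oneV_ne_zero hk).symm ∘ Eq.symm ∘ Eq.symm, fun h => neg_oneV_ne_zero hk h.symm⟩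
  have hcsd := Finset.card_sdiff_of_subset hsub
  rw [hc3, card_Vset] at hcsd
  have h3 : 3 ≤ 3 ^ k := by
    calc (3:ℕ) = 3 ^ 1 := rfl
    _ ≤ 3 ^ k := Nat.pow_le_pow_right (by norm_num) hk
  omega

/-- counting vectors with a fixed nonzero coordinate -/
lemma card_filter_ne (k : ℕ) (j : Fin k) :
    ((Vset k).filter (fun v => v j ≠ 0)).card = 2 * 3 ^ (k - 1) := by
  classical
  have hset : (Vset k).filter (fun v => v j ≠ 0)
      = Fintype.piFinset (fun i => if i = j then ({-1,1} : Finset ℤ) else ({-1,0,1} : Finset ℤ)) := by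
    ext v
    rw [Finset.mem_filter, Fintype.mem_piFinset, mem_Vset]
    constructor
    · rintro ⟨h1, h2⟩ i
      by_cases hij : i = j
      · subst hij
        have := h1 i
        simp only [if_pos]
        simp only [Finset.mem_insert, Finset.mem_singleton]
        omega
      · have := h1 i
        simp only [if_neg hij, Finset.mem_insert, Finset.mem_singleton]
        omega
    · intro h
      constructor
      · intro i
        have := h i
        by_cases hij : i = j
        · subst hij
          simp only [if_pos] at this
          simp only [Finset.mem_insert, Finset.mem_singleton] at this
          omega
        · simp only [if_neg hij, Finset.mem_insert, Finset.mem_singleton] at this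
          omega
      · have := h j
        simp only [if_pos] at this
        simp only [Finset.mem_insert, Finset.mem_singleton] at this
        omega
  rw [hset, Fintype.card_piFinset]
  have : ∀ i : Fin k, (if i = j then ({-1,1} : Finset ℤ) else ({-1,0,1} : Finset ℤ)).card
      = if i = j then 2 else 3 := by
    intro i
    split <;> decide
  rw [Finset.prod_congr rfl (fun i _ => this i)]
  rw [← Finset.mul_prod_erase Finset.univ _ (Finset.mem_univ j)]
  rw [if_pos rfl]
  have : ∀ i ∈ Finset.univ.erase j, (if i = j then 2 else 3) = 3 := by
    intro i hi
    rw [if_neg (Finset.mem_erase.1 hi).1]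
  rw [Finset.prod_congr rfl this, Finset.prod_const, Finset.card_erase_of_mem (Finset.mem_univ j)]
  simp

lemma card_Pset_filter (k : ℕ) (j : Fin k) :
    ((Pset k).filter (fun v => v j ≠ 0)).card = 3 ^ (k - 1) := by
  classical
  set s := (Vset k).filter (fun v => v j ≠ 0) with hs
  have hsub : s ⊆ Vset k := Finset.filter_subset _ _
  have h0 : (0 : Fin k → ℤ) ∉ s := by
    rw [hs, Finset.mem_filter]
    push_neg
    intro _
    simp
  have hneg : ∀ v ∈ s, -v ∈ s := by
    intro v hv
    rw [hs, Finset.mem_filter] at hv ⊢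
    refine ⟨neg_mem_Vset hv.1, ?_⟩
    simp only [Pi.neg_apply]
    have := hv.2
    omega
  have h1 := card_eq_two_mul hsub h0 hneg
  rw [card_filter_ne k j] at h1
  have h2 : (Pset k).filter (fun v => v j ≠ 0) = s ∩ Pset k := by
    ext v
    simp only [Finset.mem_inter, Finset.mem_filter, hs, Pset]
    tauto
  rw [h2]
  omega

end CoinsAux

namespace CoinsAux

lemma upper_bound {k n : ℕ} (hk : 1 ≤ k) (M : Fin k → Fin n → ℤ)
    (hS : IsScheme M) (hB : IsBalanced M) (hI : Identifies M) :
    2 * n + 3 ≤ 3 ^ k := by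
  classical
  obtain ⟨hinj, hneg⟩ := conditions_of hS hB hI
  set v : Fin n → (Fin k → ℤ) := fun c j => M j c with hv
  have hvV : ∀ c, v c ∈ Vset k := by
    intro c
    rw [mem_Vset]
    intro j
    have := hS j c
    simpa using this
  have hvinj : ∀ c c', v c = v c' → c = c' := fun c c' h => hinj c c' (fun j => congrFun h j)
  have hvneg : ∀ c c', v c ≠ -(v c') := by
    intro c c' h
    exact hneg c c' (fun j => by have := congrFun h j; simpa using this)
  set m := (Pset k).card with hm
  have hm3 : 2 * m + 1 = 3 ^ k := card_Pset k
  have hvne0 : ∀ c, v c ≠ 0 := by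
    intro c h
    apply hvneg c c
    rw [h]
    simp
  have hence : ∀ c, enc (v c) ≠ 0 := fun c => enc_ne_zero (hvV c) (hvne0 c)
  have hm3' : ((3:ℤ)^k) = 2*(m:ℤ)+1 := by exact_mod_cast hm3.symm
  have hmap : ∀ c, |enc (v c)| ∈ Finset.Icc (1:ℤ) (m:ℤ) := by
    intro c
    rw [Finset.mem_Icc]
    have h1 := abs_pos.mpr (hence c)
    have h2 := enc_bound (hvV c)
    omega
  have hFinj : Function.Injective (fun c => |enc (v c)|) := by
    intro c c' h
    simp only at h
    rcases abs_eq_abs.1 h with h | h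
    · exact hvinj c c' (enc_inj (hvV c) (hvV c') h)
    · exfalso
      apply hvneg c c'
      apply enc_inj (hvV c) (neg_mem_Vset (hvV c'))
      rw [enc_neg]
      exact h
  have hIcc : (Finset.Icc (1:ℤ) (m:ℤ)).card = m := by
    rw [Int.card_Icc]
    simp
  have hcardle : n ≤ m := by
    have h := Finset.card_le_card_of_injOn (s := Finset.univ) (t := Finset.Icc (1:ℤ) (m:ℤ))
      (fun c => |enc (v c)|) (fun c _ => hmap c) (fun a _ b _ h => hFinj h)
    rwa [Finset.card_univ, Fintype.card_fin, hIcc] at h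
  have hne : n ≠ m := by
    intro hnm
    set r : Fin n → (Fin k → ℤ) := fun c => if 0 < enc (v c) then v c else -(v c) with hr
    have hrP : ∀ c, r c ∈ Pset k := by
      intro c
      by_cases h : 0 < enc (v c)
      · have : r c = v c := by rw [hr]; simp [h]
        rw [this]
        exact Finset.mem_filter.2 ⟨hvV c, h⟩
      · have : r c = -(v c) := by rw [hr]; simp [h]
        rw [this]
        refine Finset.mem_filter.2 ⟨neg_mem_Vset (hvV c), ?_⟩
        rw [enc_neg]
        have := hence c
        omega
    have hrinj : Function.Injective r := by
      intro c c' h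
      rw [hr] at h
      simp only at h
      by_cases h1 : 0 < enc (v c) <;> by_cases h2 : 0 < enc (v c') <;>
        simp only [if_pos, if_neg, h1, h2, if_true, if_false] at h
      · exact hvinj c c' h
      · exact absurd h (hvneg c c')
      · exfalso
        apply hvneg c c'
        rw [← h]
        simp
      · exact hvinj c c' (neg_injective h)
    have himg : Finset.univ.image r = Pset k := by
      apply Finset.eq_of_subset_of_card_le
      · intro w hw
        obtain ⟨c, _, rfl⟩ := Finset.mem_image.1 hw
        exact hrP c
      · rw [Finset.card_image_of_injective _ hrinj, Finset.card_univ, Fintype.card_fin]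
        omega
    set j : Fin k := ⟨0, hk⟩ with hj
    have hsum1 : ∑ u ∈ Pset k, ((u j : ℤ) : ZMod 2) = ((3 ^ (k-1) : ℕ) : ZMod 2) := by
      rw [← Finset.sum_filter_add_sum_filter_not (Pset k) (fun u => u j ≠ 0)]
      have hA : ∀ u ∈ (Pset k).filter (fun u => u j ≠ 0), ((u j : ℤ) : ZMod 2) = 1 := by
        intro u hu
        rw [Finset.mem_filter] at hu
        have hmm := mem_Vset.1 (Finset.mem_filter.1 hu.1).1 j
        have hne := hu.2
        rcases hmm with h|h|h
        · rw [h]; decide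
        · exact absurd h hne
        · rw [h]; decide
      have hB2 : ∀ u ∈ (Pset k).filter (fun u => ¬ u j ≠ 0), ((u j : ℤ) : ZMod 2) = 0 := by
        intro u hu
        rw [Finset.mem_filter] at hu
        have := hu.2
        push_neg at this
        rw [this]
        decide
      rw [Finset.sum_congr rfl hA, Finset.sum_congr rfl hB2, Finset.sum_const, Finset.sum_const]
      rw [card_Pset_filter k j]
      simp
    have hsum2 : ∑ u ∈ Pset k, ((u j : ℤ) : ZMod 2) = 0 := by
      rw [← himg, Finset.sum_image (fun a _ b _ h => hrinj h)]
      have hterm : ∀ c, ((r c j : ℤ) : ZMod 2) = ((v c j : ℤ) : ZMod 2) := by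
        intro c
        by_cases h : 0 < enc (v c)
        · have : r c = v c := by rw [hr]; simp [h]
          rw [this]
        · have : r c = -(v c) := by rw [hr]; simp [h]
          rw [this]
          simp only [Pi.neg_apply, Int.cast_neg]
          exact CharTwo.neg_eq _
      rw [Finset.sum_congr rfl (fun c _ => hterm c)]
      have hcast : ∑ c, ((v c j : ℤ) : ZMod 2) = (((∑ c, v c j : ℤ)) : ZMod 2) := by
        push_cast
        rfl
      rw [hcast]
      have hrow : ∑ c, v c j = 0 := balanced_rowsum hS hB j
      rw [hrow]
      simp
    rw [hsum2] at hsum1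
    have h31 : ((3 ^ (k-1) : ℕ) : ZMod 2) = 1 := by
      rw [Nat.cast_pow, show ((3:ℕ):ZMod 2) = 1 by decide, one_pow]
    rw [h31] at hsum1
    exact absurd hsum1 (by decide)
  omega

end CoinsAux


/-- For every k ≥ 2, the maximum number of coins for which a balanced weighing
scheme using k weighings identifies the counterfeit is exactly (3 ^ k - 3) / 2. -/
theorem max_coins_eq (k : ℕ) (hk : 2 ≤ k) :
    IsGreatest {n : ℕ | ∃ M : Fin k → Fin n → ℤ,
      IsScheme M ∧ IsBalanced M ∧ Identifies M} ((3 ^ k - 3) / 2) := by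
  classical
  have hk1 : 1 ≤ k := by omega
  have h3k : 9 ≤ 3 ^ k := by
    calc (9:ℕ) = 3 ^ 2 := rfl
    _ ≤ 3 ^ k := Nat.pow_le_pow_right (by norm_num) hk
  have hodd : 3 ^ k % 2 = 1 := Nat.odd_iff.1 (Odd.pow (by decide))
  constructor
  · -- membership
    obtain ⟨T, hT⟩ := CoinsAux.good_exists k hk1
    have hcard := CoinsAux.good_card hk1 hT
    have hcard' : T.card = (3 ^ k - 3) / 2 := by omega
    set n := (3 ^ k - 3) / 2 with hn
    have e : Fin n ≃ {x // x ∈ T} := (finCongr hcard'.symm).trans T.equivFin.symm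
    set ι : Fin n → (Fin k → ℤ) := fun i => (e i : Fin k → ℤ) with hι
    have hιT : ∀ i, ι i ∈ T := fun i => (e i).2
    have hιinj : Function.Injective ι := fun a b h => e.injective (Subtype.ext h)
    have hιV : ∀ i, ι i ∈ CoinsAux.Vset k := fun i => hT.subV (hιT i)
    have hbal : ∀ j, (Finset.univ.filter (fun i => ι i j = 1)).card
        = (Finset.univ.filter (fun i => ι i j = -1)).card := by
      intro j
      have hsum : ∑ i, ι i j = 0 := by
        have h1 : ∑ i : Fin n, ι i j = ∑ x : {x // x ∈ T}, (x : Fin k → ℤ) j :=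
          Equiv.sum_comp e (fun x => (x : Fin k → ℤ) j)
        have h2 : ∑ x : {x // x ∈ T}, (x : Fin k → ℤ) j = ∑ u ∈ T, u j :=
          Finset.sum_coe_sort T (fun u => u j)
        have h3 : ∑ u ∈ T, u j = 0 := by
          have := congrFun hT.sum0 j
          rwa [Finset.sum_apply] at this
        rw [h1, h2, h3]
      have hr := CoinsAux.rowsum_eq (fun i => ι i j) (fun i => by
        have := CoinsAux.mem_Vset.1 (hιV i) j
        tauto)
      have hr' : ∑ i : Fin n, ι i j =
          ((Finset.univ.filter (fun i => ι i j = 1)).card : ℤ)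
            - ((Finset.univ.filter (fun i => ι i j = -1)).card : ℤ) := hr
      rw [hsum] at hr'
      omega
    refine ⟨fun j i => ι i j, ?_, ?_, ?_⟩
    · intro j i
      have := CoinsAux.mem_Vset.1 (hιV i) j
      simp only [Set.mem_insert_iff, Set.mem_singleton_iff]
      tauto
    · intro j
      exact hbal j
    · apply CoinsAux.identifies_of
      · intro j i
        have := CoinsAux.mem_Vset.1 (hιV i) j
        simp only [Set.mem_insert_iff, Set.mem_singleton_iff]
        tauto
      · intro j
        exact hbal j
      · intro c c' hcc
        apply hιinj
        funext j
        exact hcc j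
      · intro c c' hcc
        have h1 : ι c = -(ι c') := by
          funext j
          rw [Pi.neg_apply]
          exact hcc j
        have h2 := hT.negdisj (ι c') (hιT c')
        rw [← h1] at h2
        exact h2 (hιT c)
  · -- upper bound
    rintro n ⟨M, hS, hB, hI⟩
    have := CoinsAux.upper_bound hk1 M hS hB hI
    omega
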